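/- Let γ ≥ 0 and define L_γ : M_n(ℂ) → M_n(ℂ) by L_γ(A) = γ (tr A) I_n − A. For any 1 ≤ k ≤ n, the map L_γ is k-positive if and only if γ ≥ k. -/

import Mathlib

open Matrix Finset Module ComplexOrder

theorem stmt13_cs {k : ℕ} (z : Fin k → ℂ) :
    Complex.normSq (∑ b, z b) ≤ (k : ℝ) * ∑ b, Complex.normSq (z b) := by
  have h1 : ‖∑ b, z b‖ ≤ ∑ b, ‖z b‖ := by
    simpa using norm_sum_le Finset.univ z
  have h2 : (∑ b, ‖z b‖) ^ 2 ≤ (k:ℝ) * ∑ b, ‖z b‖ ^ 2 := by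
    simpa using sq_sum_le_card_mul_sum_sq (s := (Finset.univ : Finset (Fin k)))
      (f := fun b => ‖z b‖)
  calc Complex.normSq (∑ b, z b) = ‖∑ b, z b‖ ^ 2 := (Complex.sq_norm _).symm
    _ ≤ (∑ b, ‖z b‖) ^ 2 := pow_le_pow_left₀ (norm_nonneg _) h1 2
    _ ≤ (k:ℝ) * ∑ b, ‖z b‖ ^ 2 := h2
    _ = (k:ℝ) * ∑ b, Complex.normSq (z b) := by simp [Complex.sq_norm]

theorem stmt13_cs2 {α : Type*} [Fintype α] (z w : α → ℂ) :
    Complex.normSq (∑ a, z a * w a)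
      ≤ (∑ a, Complex.normSq (z a)) * (∑ a, Complex.normSq (w a)) := by
  have h1 : ‖∑ a, z a * w a‖ ≤ ∑ a, ‖z a‖ * ‖w a‖ := by
    simpa [norm_mul] using norm_sum_le Finset.univ (fun a => z a * w a)
  have h2 := Finset.sum_mul_sq_le_sq_mul_sq Finset.univ
    (fun a => ‖z a‖) (fun a => ‖w a‖)
  calc Complex.normSq (∑ a, z a * w a) = ‖∑ a, z a * w a‖ ^ 2 :=
        (Complex.sq_norm _).symm
    _ ≤ (∑ a, ‖z a‖ * ‖w a‖) ^ 2 := by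
        refine pow_le_pow_left₀ (norm_nonneg _) h1 2
    _ ≤ (∑ a, ‖z a‖ ^ 2) * (∑ a, ‖w a‖ ^ 2) := h2
    _ = (∑ a, Complex.normSq (z a)) * (∑ a, Complex.normSq (w a)) := by
        simp [Complex.sq_norm]

theorem stmt13_trace_bound {n k : ℕ} (u v : Fin k → Fin n → ℂ) :
    Complex.normSq (∑ b : Fin n, ∑ j : Fin k, u j b * v j b)
      ≤ (k:ℝ) * ∑ a : Fin n, ∑ c : Fin n, Complex.normSq (∑ j, u j a * v j c) := by
  classical
  set U : Fin k → EuclideanSpace ℂ (Fin n) := fun j => WithLp.toLp 2 (u j) with hUdef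
  set V : Submodule ℂ (EuclideanSpace ℂ (Fin n)) := Submodule.span ℂ (Set.range U) with hV
  haveI : FiniteDimensional ℂ V := FiniteDimensional.span_of_finite ℂ (Set.finite_range U)
  set r : ℕ := finrank ℂ V with hr
  have hrk : r ≤ k := by
    have := finrank_range_le_card (R := ℂ) U
    simpa [Set.finrank, hr, hV] using this
  set b : OrthonormalBasis (Fin r) ℂ V := stdOrthonormalBasis ℂ V with hb
  set f : Fin r → Fin n → ℂ := fun s a => ((b s : V) : EuclideanSpace ℂ (Fin n)) a with hf
  have hmem : ∀ j, U j ∈ V := fun j => Submodule.subset_span (Set.mem_range_self j)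
  set cf : Fin k → Fin r → ℂ := fun j s => b.repr ⟨U j, hmem j⟩ s with hcf
  have hU : ∀ j a, u j a = ∑ s, cf j s * f s a := by
    intro j a
    have := b.sum_repr ⟨U j, hmem j⟩
    have h2 := congrArg (fun x : V => (x : EuclideanSpace ℂ (Fin n)) a) this
    have h3 : ∀ (wv : Fin r → EuclideanSpace ℂ (Fin n)), (∑ x, wv x) a = ∑ x, wv x a :=
      fun wv => by rw [WithLp.ofLp_sum]; exact Finset.sum_apply a Finset.univ _
    simpa [Submodule.coe_sum, hf, hcf, hUdef, h3, Pi.smul_apply, smul_eq_mul]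
      using h2.symm
  have horth : ∀ s t, (∑ a, (starRingEnd ℂ) (f s a) * f t a) = if s = t then 1 else 0 := by
    intro s t
    have := orthonormal_iff_ite.mp b.orthonormal s t
    rw [Submodule.coe_inner] at this
    simp [PiLp.inner_apply, RCLike.inner_apply, hf] at this
    rw [← this]
    exact Finset.sum_congr rfl fun _ _ => mul_comm _ _
  set g : Fin r → Fin n → ℂ := fun s c => ∑ j, cf j s * v j c with hg
  have hW : ∀ a c, (∑ j, u j a * v j c) = ∑ s, f s a * g s c := by
    intro a c
    calc ∑ j, u j a * v j c = ∑ j, (∑ s, cf j s * f s a) * v j c := by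
          refine Finset.sum_congr rfl fun j _ => ?_; rw [hU]
      _ = ∑ j, ∑ s, cf j s * f s a * v j c := by
          refine Finset.sum_congr rfl fun j _ => ?_; rw [Finset.sum_mul]
      _ = ∑ s, ∑ j, cf j s * f s a * v j c := Finset.sum_comm
      _ = ∑ s, f s a * g s c := by
          refine Finset.sum_congr rfl fun s _ => ?_
          rw [hg, Finset.mul_sum]
          exact Finset.sum_congr rfl fun j _ => by ring
  have hfnorm : ∀ s, (∑ a, Complex.normSq (f s a)) = 1 := by
    intro s
    have h := horth s s
    simp only [eq_self_iff_true, if_true, ← Complex.normSq_eq_conj_mul_self] at h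
    exact_mod_cast h
  have key : ∀ c, (∑ a, (starRingEnd ℂ) (∑ s, f s a * g s c) * (∑ s, f s a * g s c))
      = ∑ s, (starRingEnd ℂ) (g s c) * g s c := by
    intro c
    calc ∑ a, (starRingEnd ℂ) (∑ s, f s a * g s c) * (∑ s, f s a * g s c)
        = ∑ a, ∑ s, ∑ t, ((starRingEnd ℂ) (f s a) * (starRingEnd ℂ) (g s c))
            * (f t a * g t c) := by
          refine Finset.sum_congr rfl fun a _ => ?_
          rw [map_sum, Finset.sum_mul]
          refine Finset.sum_congr rfl fun s _ => ?_
          rw [Finset.mul_sum]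
          refine Finset.sum_congr rfl fun t _ => ?_
          rw [_root_.map_mul]
      _ = ∑ s, ∑ t, ∑ a, ((starRingEnd ℂ) (f s a) * (starRingEnd ℂ) (g s c))
            * (f t a * g t c) := by
          rw [Finset.sum_comm]
          exact Finset.sum_congr rfl fun s _ => Finset.sum_comm
      _ = ∑ s, ∑ t, ((starRingEnd ℂ) (g s c) * g t c)
            * ∑ a, (starRingEnd ℂ) (f s a) * f t a := by
          refine Finset.sum_congr rfl fun s _ => Finset.sum_congr rfl fun t _ => ?_
          rw [Finset.mul_sum]
          exact Finset.sum_congr rfl fun a _ => by ring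
      _ = ∑ s, (starRingEnd ℂ) (g s c) * g s c := by
          refine Finset.sum_congr rfl fun s _ => ?_
          simp only [horth, mul_ite, mul_one, mul_zero]
          simp [Finset.sum_ite_eq, Finset.sum_ite_eq']
  have hcol : ∀ c, (∑ a, Complex.normSq (∑ s, f s a * g s c)) = ∑ s, Complex.normSq (g s c) := by
    intro c
    have h := key c
    simp only [← Complex.normSq_eq_conj_mul_self] at h
    exact_mod_cast h
  calc Complex.normSq (∑ b : Fin n, ∑ j : Fin k, u j b * v j b)
      = Complex.normSq (∑ s, ∑ b, f s b * g s b) := by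
        rw [show (∑ b : Fin n, ∑ j : Fin k, u j b * v j b) = ∑ s, ∑ b, f s b * g s b from
          (Finset.sum_congr rfl fun bb _ => hW bb bb).trans Finset.sum_comm]
    _ ≤ (r:ℝ) * ∑ s, Complex.normSq (∑ b, f s b * g s b) :=
        stmt13_cs (fun s => ∑ b, f s b * g s b)
    _ ≤ (k:ℝ) * ∑ s, Complex.normSq (∑ b, f s b * g s b) := by
        refine mul_le_mul_of_nonneg_right ?_ ?_
        · exact_mod_cast hrk
        · exact Finset.sum_nonneg fun _ _ => Complex.normSq_nonneg _
    _ ≤ (k:ℝ) * ∑ s, ∑ c, Complex.normSq (g s c) := by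
        refine mul_le_mul_of_nonneg_left ?_ (by positivity)
        refine Finset.sum_le_sum fun s _ => ?_
        calc Complex.normSq (∑ b, f s b * g s b)
            ≤ (∑ b, Complex.normSq (f s b)) * (∑ b, Complex.normSq (g s b)) :=
              stmt13_cs2 (f s) (g s)
          _ = ∑ c, Complex.normSq (g s c) := by rw [hfnorm s, one_mul]
    _ = (k:ℝ) * ∑ a : Fin n, ∑ c : Fin n, Complex.normSq (∑ j, u j a * v j c) := by
        congr 1
        calc ∑ s, ∑ c, Complex.normSq (g s c)
            = ∑ c, ∑ s, Complex.normSq (g s c) := Finset.sum_comm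
          _ = ∑ c, ∑ a, Complex.normSq (∑ s, f s a * g s c) := by
              exact Finset.sum_congr rfl fun c _ => (hcol c).symm
          _ = ∑ a, ∑ c, Complex.normSq (∑ s, f s a * g s c) := Finset.sum_comm
          _ = ∑ a, ∑ c, Complex.normSq (∑ j, u j a * v j c) := by
              exact Finset.sum_congr rfl fun a _ => Finset.sum_congr rfl fun c _ => by
                rw [hW]


theorem stmt13_sum3_comm {α β γ' M : Type*} [Fintype α] [Fintype β] [Fintype γ']
    [AddCommMonoid M] (f : α → β → γ' → M) :
    ∑ i, ∑ a, ∑ m, f i a m = ∑ m, ∑ i, ∑ a, f i a m := by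
  calc ∑ i, ∑ a, ∑ m, f i a m
      = ∑ i, ∑ m, ∑ a, f i a m := Finset.sum_congr rfl fun i _ => Finset.sum_comm
    _ = ∑ m, ∑ i, ∑ a, f i a m := Finset.sum_comm

theorem stmt13_sum5_comm {α β γ' δ ε M : Type*} [Fintype α] [Fintype β] [Fintype γ']
    [Fintype δ] [Fintype ε] [AddCommMonoid M] (f : α → β → γ' → δ → ε → M) :
    ∑ i, ∑ a, ∑ j, ∑ c, ∑ m, f i a j c m
      = ∑ m, ∑ a, ∑ c, ∑ i, ∑ j, f i a j c m := by
  calc ∑ i, ∑ a, ∑ j, ∑ c, ∑ m, f i a j c m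
      = ∑ i, ∑ a, ∑ j, ∑ m, ∑ c, f i a j c m :=
        Finset.sum_congr rfl fun i _ => Finset.sum_congr rfl fun a _ =>
          Finset.sum_congr rfl fun j _ => Finset.sum_comm
    _ = ∑ i, ∑ a, ∑ m, ∑ j, ∑ c, f i a j c m :=
        Finset.sum_congr rfl fun i _ => Finset.sum_congr rfl fun a _ => Finset.sum_comm
    _ = ∑ i, ∑ m, ∑ a, ∑ j, ∑ c, f i a j c m :=
        Finset.sum_congr rfl fun i _ => Finset.sum_comm
    _ = ∑ m, ∑ i, ∑ a, ∑ j, ∑ c, f i a j c m := Finset.sum_comm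
    _ = ∑ m, ∑ a, ∑ i, ∑ j, ∑ c, f i a j c m :=
        Finset.sum_congr rfl fun m _ => Finset.sum_comm
    _ = ∑ m, ∑ a, ∑ i, ∑ c, ∑ j, f i a j c m :=
        Finset.sum_congr rfl fun m _ => Finset.sum_congr rfl fun a _ =>
          Finset.sum_congr rfl fun i _ => Finset.sum_comm
    _ = ∑ m, ∑ a, ∑ c, ∑ i, ∑ j, f i a j c m :=
        Finset.sum_congr rfl fun m _ => Finset.sum_congr rfl fun a _ => Finset.sum_comm

theorem stmt13_t1 {n k : ℕ} {ι : Type*} [Fintype ι] (γc : ℂ)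
    (B : Matrix ι (Fin k × Fin n) ℂ) (y : Fin k × Fin n → ℂ) :
    ∑ i : Fin k, ∑ a : Fin n, ∑ j : Fin k,
      (γc * ((starRingEnd ℂ) (y (i,a)) * ((∑ c : Fin n, ∑ m : ι,
        (starRingEnd ℂ) (B m (i,c)) * B m (j,c)) * y (j,a))))
    = γc * ∑ m : ι, ∑ a : Fin n, ∑ c : Fin n,
        (starRingEnd ℂ) (∑ i : Fin k, B m (i,c) * y (i,a)) *
          (∑ j : Fin k, B m (j,c) * y (j,a)) := by
  simp only [map_sum, _root_.map_mul, Finset.sum_mul, Finset.mul_sum]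
  rw [stmt13_sum5_comm (fun i a j c m => γc * ((starRingEnd ℂ) (y (i,a)) *
    ((starRingEnd ℂ) (B m (i,c)) * B m (j,c) * y (j,a))))]
  refine Finset.sum_congr rfl fun m _ => Finset.sum_congr rfl fun a _ =>
    Finset.sum_congr rfl fun c _ => ?_
  rw [Finset.sum_comm]
  exact Finset.sum_congr rfl fun i _ => Finset.sum_congr rfl fun j _ => by ring

theorem stmt13_t2 {κ : Type*} {ι : Type*} [Fintype ι] [Fintype κ]
    (B : Matrix ι κ ℂ) (y : κ → ℂ) :
    ∑ u : κ, ∑ v : κ,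
      ((starRingEnd ℂ) (y u) * ((∑ m : ι, (starRingEnd ℂ) (B m u) * B m v) * y v))
    = ∑ m : ι, (starRingEnd ℂ) (∑ v : κ, B m v * y v) * (∑ v : κ, B m v * y v) := by
  simp only [map_sum, _root_.map_mul, Finset.sum_mul, Finset.mul_sum]
  rw [stmt13_sum3_comm (fun u v m => (starRingEnd ℂ) (y u) *
    ((starRingEnd ℂ) (B m u) * B m v * y v))]
  refine Finset.sum_congr rfl fun m _ => ?_
  rw [Finset.sum_comm]
  exact Finset.sum_congr rfl fun u _ => Finset.sum_congr rfl fun v _ => by ring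

theorem stmt13_quad {n k : ℕ} {ι : Type*} [Fintype ι] (γc : ℂ)
    (B : Matrix ι (Fin k × Fin n) ℂ) (y : Fin k × Fin n → ℂ) :
    ∑ u : Fin k × Fin n, (starRingEnd ℂ) (y u) * ∑ v : Fin k × Fin n,
      ((γc * (∑ c, (Bᴴ*B) (u.1, c) (v.1, c)) * (if u.2 = v.2 then 1 else 0)
        - (Bᴴ*B) u v) * y v)
    = γc * (∑ m : ι, ∑ a : Fin n, ∑ c : Fin n,
        (starRingEnd ℂ) (∑ j, B m (j,c) * y (j,a)) * (∑ j, B m (j,c) * y (j,a)))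
      - ∑ m : ι, (starRingEnd ℂ) (∑ b, ∑ j, B m (j,b) * y (j,b)) *
          (∑ b, ∑ j, B m (j,b) * y (j,b)) := by
  have hAval : ∀ p q : Fin k × Fin n,
      (Bᴴ*B) p q = ∑ m : ι, (starRingEnd ℂ) (B m p) * B m q := by
    intro p q; simp [Matrix.mul_apply, Matrix.conjTranspose_apply]
  have split : ∑ u : Fin k × Fin n, (starRingEnd ℂ) (y u) * ∑ v : Fin k × Fin n,
      ((γc * (∑ c, (Bᴴ*B) (u.1, c) (v.1, c)) * (if u.2 = v.2 then 1 else 0)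
        - (Bᴴ*B) u v) * y v)
      = (∑ u : Fin k × Fin n, ∑ v : Fin k × Fin n, (starRingEnd ℂ) (y u) *
          ((γc * (∑ c, (Bᴴ*B) (u.1, c) (v.1, c)) * (if u.2 = v.2 then 1 else 0)) * y v))
        - ∑ u : Fin k × Fin n, ∑ v : Fin k × Fin n, (starRingEnd ℂ) (y u) *
            ((Bᴴ*B) u v * y v) := by
    rw [← Finset.sum_sub_distrib]
    refine Finset.sum_congr rfl fun u _ => ?_
    rw [Finset.mul_sum, ← Finset.sum_sub_distrib]
    exact Finset.sum_congr rfl fun v _ => by ring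
  rw [split]
  congr 1
  · -- term 1
    calc ∑ u : Fin k × Fin n, ∑ v : Fin k × Fin n, (starRingEnd ℂ) (y u) *
          ((γc * (∑ c, (Bᴴ*B) (u.1, c) (v.1, c)) * (if u.2 = v.2 then 1 else 0)) * y v)
        = ∑ i : Fin k, ∑ a : Fin n, ∑ j : Fin k,
            (γc * ((starRingEnd ℂ) (y (i,a)) * ((∑ c : Fin n, ∑ m : ι,
              (starRingEnd ℂ) (B m (i,c)) * B m (j,c)) * y (j,a)))) := by
          simp only [Fintype.sum_prod_type, hAval]
          refine Finset.sum_congr rfl fun i _ => Finset.sum_congr rfl fun a _ =>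
            Finset.sum_congr rfl fun j _ => ?_
          simp only [mul_ite, ite_mul, mul_one, mul_zero, zero_mul,
            Finset.sum_ite_eq, Finset.mem_univ, if_true]
          ring
      _ = γc * (∑ m : ι, ∑ a : Fin n, ∑ c : Fin n,
            (starRingEnd ℂ) (∑ j, B m (j,c) * y (j,a)) *
              (∑ j, B m (j,c) * y (j,a))) := stmt13_t1 γc B y
  · -- term 2
    calc ∑ u : Fin k × Fin n, ∑ v : Fin k × Fin n, (starRingEnd ℂ) (y u) *
          ((Bᴴ*B) u v * y v)
        = ∑ u : Fin k × Fin n, ∑ v : Fin k × Fin n, (starRingEnd ℂ) (y u) *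
            ((∑ m : ι, (starRingEnd ℂ) (B m u) * B m v) * y v) := by
          simp only [hAval]
      _ = ∑ m : ι, (starRingEnd ℂ) (∑ v : Fin k × Fin n, B m v * y v) *
            (∑ v : Fin k × Fin n, B m v * y v) := stmt13_t2 B y
      _ = ∑ m : ι, (starRingEnd ℂ) (∑ b, ∑ j, B m (j,b) * y (j,b)) *
            (∑ b, ∑ j, B m (j,b) * y (j,b)) := by
          refine Finset.sum_congr rfl fun m _ => ?_
          rw [show ∑ v : Fin k × Fin n, B m v * y v
              = ∑ b, ∑ j, B m (j,b) * y (j,b) by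
            rw [Fintype.sum_prod_type]; exact Finset.sum_comm]


open Matrix ComplexOrder in
/-- `L_γ(A) = γ (tr A) I − A` is `k`-positive iff `γ ≥ k`. -/
theorem stmt_13 {n k : ℕ} (hk1 : 1 ≤ k) (hkn : k ≤ n) (γ : ℝ) (hγ : 0 ≤ γ)
    (L : Matrix (Fin n) (Fin n) ℂ → Matrix (Fin n) (Fin n) ℂ)
    (hL : ∀ A, L A = (γ : ℂ) • A.trace • (1 : Matrix (Fin n) (Fin n) ℂ) - A) :
    (∀ A : Matrix (Fin k × Fin n) (Fin k × Fin n) ℂ, A.PosSemidef →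
      (Matrix.of fun u v : Fin k × Fin n =>
        L (Matrix.of fun a b => A (u.1, a) (v.1, b)) u.2 v.2).PosSemidef)
    ↔ (k : ℝ) ≤ γ := by
  have entry : ∀ (A : Matrix (Fin k × Fin n) (Fin k × Fin n) ℂ) (u v : Fin k × Fin n),
      (Matrix.of fun u v : Fin k × Fin n =>
        L (Matrix.of fun a b => A (u.1, a) (v.1, b)) u.2 v.2) u v
      = (γ:ℂ) * (∑ c, A (u.1, c) (v.1, c)) * (if u.2 = v.2 then 1 else 0) - A u v := by
    intro A u v
    simp [hL, Matrix.trace, Matrix.sub_apply, Matrix.smul_apply, Matrix.one_apply, Matrix.diag,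
      mul_assoc, mul_ite, mul_one, mul_zero, smul_eq_mul]
  constructor
  · -- k-positive → k ≤ γ
    intro hpos
    set e : Fin k → Fin n := Fin.castLE hkn with he
    have einj : Function.Injective e := Fin.castLE_injective hkn
    set x : Fin k × Fin n → ℂ := fun u => if u.2 = e u.1 then 1 else 0 with hx
    set C : Matrix (Fin 1) (Fin k × Fin n) ℂ := Matrix.of fun _ u => x u with hC
    set A : Matrix (Fin k × Fin n) (Fin k × Fin n) ℂ := Cᴴ * C with hA
    have hApsd : A.PosSemidef := Matrix.posSemidef_conjTranspose_mul_self C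
    have hAval : ∀ p q, A p q = (starRingEnd ℂ) (x p) * x q := by
      intro p q
      simp [hA, hC, Matrix.mul_apply, Matrix.conjTranspose_apply]
    have hM := (hpos A hApsd).dotProduct_mulVec_nonneg x
    set M : Matrix (Fin k × Fin n) (Fin k × Fin n) ℂ := Matrix.of fun u v : Fin k × Fin n =>
      L (Matrix.of fun a b => A (u.1, a) (v.1, b)) u.2 v.2 with hMdef
    have hval : star x ⬝ᵥ M *ᵥ x = ((k:ℝ) * (γ - (k:ℝ)) : ℝ) := by
      have step1 : star x ⬝ᵥ M *ᵥ x = ∑ i : Fin k, ∑ j : Fin k, M (i, e i) (j, e j) := by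
        simp only [dotProduct, Matrix.mulVec, Pi.star_apply, Fintype.sum_prod_type, hx]
        simp only [apply_ite (star : ℂ → ℂ), star_one, star_zero, ite_mul, mul_ite,
          one_mul, mul_one, zero_mul, mul_zero, Finset.sum_ite_eq, Finset.sum_ite_eq',
          Finset.mem_univ, if_true]
      have step2 : ∀ i j : Fin k, M (i, e i) (j, e j) = (if i = j then (γ:ℂ) else 0) - 1 := by
        intro i j
        rw [hMdef, entry A (i, e i) (j, e j)]
        simp only [hAval, hx]
        simp [apply_ite (starRingEnd ℂ), mul_ite, ite_mul, mul_one, mul_zero, one_mul,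
          zero_mul, Finset.sum_ite_eq, Finset.sum_ite_eq', einj.eq_iff]
        by_cases h : i = j <;> simp [h]
      rw [step1]
      simp only [step2]
      rw [show ((k:ℝ) * (γ - (k:ℝ)) : ℝ) = ((k:ℝ) * γ - (k:ℝ)*(k:ℝ) : ℝ) by ring]
      simp [Finset.sum_sub_distrib, Finset.sum_ite_eq, Finset.card_univ]
    rw [hval] at hM
    have hre : (0:ℝ) ≤ (k:ℝ) * (γ - (k:ℝ)) := Complex.zero_le_real.mp hM
    have hk0 : (0:ℝ) < (k:ℝ) := by exact_mod_cast hk1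
    nlinarith
  · -- k ≤ γ → k-positive
    intro hγk A hA
    obtain ⟨B, hB⟩ : ∃ B : Matrix (Fin k × Fin n) (Fin k × Fin n) ℂ, A = Bᴴ * B := by
      open MatrixOrder in
      obtain ⟨B, hB⟩ := CStarAlgebra.nonneg_iff_eq_star_mul_self.mp hA.nonneg
      exact ⟨B, hB⟩
    refine Matrix.posSemidef_iff_dotProduct_mulVec.mpr ⟨?_, ?_⟩
    · -- Hermitian
      have hherm : ∀ p q, (starRingEnd ℂ) (A p q) = A q p := by
        intro p q
        have h := congrFun (congrFun hA.1 q) p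
        rw [Matrix.conjTranspose_apply] at h
        rw [← RCLike.star_def]
        exact h
      show _ᴴ = _
      ext u v
      rw [Matrix.conjTranspose_apply, entry A v u, entry A u v]
      simp only [RCLike.star_def, map_sub, _root_.map_mul, map_sum, Complex.conj_ofReal,
        hherm, apply_ite (starRingEnd ℂ), _root_.map_one, _root_.map_zero]
      by_cases h : u.2 = v.2
      · simp [h]
      · rw [if_neg h, if_neg fun hh => h hh.symm]
    · intro y
      have calc1 : star y ⬝ᵥ (Matrix.of fun u v : Fin k × Fin n =>
          L (Matrix.of fun a b => A (u.1, a) (v.1, b)) u.2 v.2) *ᵥ y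
          = ∑ u : Fin k × Fin n, (starRingEnd ℂ) (y u) * ∑ v : Fin k × Fin n,
            (((γ:ℂ) * (∑ c, (Bᴴ*B) (u.1, c) (v.1, c)) * (if u.2 = v.2 then 1 else 0)
              - (Bᴴ*B) u v) * y v) := by
        simp only [dotProduct, Matrix.mulVec, Pi.star_apply, RCLike.star_def]
        refine Finset.sum_congr rfl fun u _ => ?_
        congr 1
        refine Finset.sum_congr rfl fun v _ => ?_
        rw [entry A u v, hB]
      rw [calc1, stmt13_quad (γ:ℂ) B y]
      simp only [← Complex.normSq_eq_conj_mul_self]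
      have cast1 : ((γ:ℂ) * ∑ m : Fin k × Fin n, ∑ a : Fin n, ∑ c : Fin n,
            ((Complex.normSq (∑ j, B m (j,c) * y (j,a)) : ℝ) : ℂ))
          - (∑ m : Fin k × Fin n, ((Complex.normSq (∑ b, ∑ j, B m (j,b) * y (j,b)) : ℝ) : ℂ))
          = (((γ * ∑ m : Fin k × Fin n, ∑ a : Fin n, ∑ c : Fin n,
              Complex.normSq (∑ j, B m (j,c) * y (j,a)))
            - ∑ m : Fin k × Fin n, Complex.normSq (∑ b, ∑ j, B m (j,b) * y (j,b)) : ℝ) : ℂ) := by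
        push_cast
        ring
      rw [cast1]
      rw [Complex.zero_le_real]
      rw [sub_nonneg]
      have hbound : ∀ m : Fin k × Fin n,
          Complex.normSq (∑ b, ∑ j, B m (j,b) * y (j,b))
            ≤ (k:ℝ) * ∑ a : Fin n, ∑ c : Fin n, Complex.normSq (∑ j, B m (j,c) * y (j,a)) := by
        intro m
        have hmc : ∀ a c : Fin n, (∑ j, B m (j,c) * y (j,a)) = ∑ j, y (j,a) * B m (j,c) :=
          fun a c => Finset.sum_congr rfl fun j _ => mul_comm _ _
        have := stmt13_trace_bound (fun j a => y (j,a)) (fun j c => B m (j,c))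
        calc Complex.normSq (∑ b, ∑ j, B m (j,b) * y (j,b))
            = Complex.normSq (∑ b, ∑ j, y (j,b) * B m (j,b)) := by
              rw [show (∑ b, ∑ j, B m (j,b) * y (j,b)) = ∑ b, ∑ j, y (j,b) * B m (j,b) from
                Finset.sum_congr rfl fun b _ => hmc b b]
          _ ≤ (k:ℝ) * ∑ a : Fin n, ∑ c : Fin n, Complex.normSq (∑ j, y (j,a) * B m (j,c)) :=
              this
          _ = (k:ℝ) * ∑ a : Fin n, ∑ c : Fin n, Complex.normSq (∑ j, B m (j,c) * y (j,a)) := by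
              congr 1
              exact Finset.sum_congr rfl fun a _ => Finset.sum_congr rfl fun c _ => by
                rw [hmc a c]
      calc ∑ m : Fin k × Fin n, Complex.normSq (∑ b, ∑ j, B m (j,b) * y (j,b))
          ≤ ∑ m : Fin k × Fin n, (k:ℝ) * ∑ a : Fin n, ∑ c : Fin n,
              Complex.normSq (∑ j, B m (j,c) * y (j,a)) :=
            Finset.sum_le_sum fun m _ => hbound m
        _ = (k:ℝ) * ∑ m : Fin k × Fin n, ∑ a : Fin n, ∑ c : Fin n,
              Complex.normSq (∑ j, B m (j,c) * y (j,a)) := by rw [Finset.mul_sum]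
        _ ≤ γ * ∑ m : Fin k × Fin n, ∑ a : Fin n, ∑ c : Fin n,
              Complex.normSq (∑ j, B m (j,c) * y (j,a)) := by
            refine mul_le_mul_of_nonneg_right hγk ?_
            exact Finset.sum_nonneg fun m _ => Finset.sum_nonneg fun a _ =>
              Finset.sum_nonneg fun c _ => Complex.normSq_nonneg _
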